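/- Consider a parallel network with n edges and nondecreasing continuous cost functions c_i, and let B := min_i lim_{z→∞} c_i(z) be finite. Then the optimum cost satisfies Opt(Γ_M)/M → B as M → ∞, where Opt(Γ_M) = min{ Σᵢ xᵢ c_i(xᵢ) : xᵢ ≥ 0, Σᵢ xᵢ = M }. -/

import Mathlib

open Filter Real Set

/-- The optimum cost of the parallel network game with inflow `M`. -/
noncomputable def OptCost (n : ℕ) (c : Fin n → ℝ → ℝ) (M : ℝ) : ℝ :=
  sInf {C | ∃ x : Fin n → ℝ,
    (∀ i, 0 ≤ x i) ∧ (∑ i, x i) = M ∧ C = ∑ i, x i * c i (x i)}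

/-- In a parallel network with `n` edges, nondecreasing continuous nonnegative cost functions
`c i` with limits `L i ∈ [0,∞]` at infinity, if `B = min_i L i` is finite, then
`Opt(Γ_M)/M → B` as `M → ∞`. -/
theorem opt_div_tendsto_min_limit
    (n : ℕ) (hn : 0 < n) (c : Fin n → ℝ → ℝ)
    (hmono : ∀ i, MonotoneOn (c i) (Ici 0))
    (hcont : ∀ i, ContinuousOn (c i) (Ici 0))
    (hnn : ∀ i, ∀ x, 0 ≤ x → 0 ≤ c i x)
    (L : Fin n → EReal) (B : ℝ)
    (hL : ∀ i, Tendsto (fun x => ((c i x : EReal))) atTop (nhds (L i)))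
    (hB : IsLeast (Set.range L) (B : EReal)) :
    Tendsto (fun M => OptCost n c M / M) atTop (nhds B) := by
  haveI : Nonempty (Fin n) := ⟨⟨0, hn⟩⟩
  obtain ⟨i₀, hi₀⟩ := hB.1
  set S : ℝ → Set ℝ := fun M => {C | ∃ x : Fin n → ℝ,
    (∀ i, 0 ≤ x i) ∧ (∑ i, x i) = M ∧ C = ∑ i, x i * c i (x i)} with hS
  have hOpt : ∀ M, OptCost n c M = sInf (S M) := fun M => rfl
  -- membership of the "all flow on i₀" point
  have hmem : ∀ M : ℝ, 0 ≤ M → M * c i₀ M ∈ S M := by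
    intro M hM
    refine ⟨fun i => if i = i₀ then M else 0, ?_, ?_, ?_⟩
    · intro i; dsimp only; split <;> simp [hM]
    · simp
    · rw [Finset.sum_eq_single i₀]
      · simp
      · intro b _ hb; simp [hb]
      · simp
  -- lower bound 0 for the set
  have hbdd : ∀ M, BddBelow (S M) := by
    intro M
    refine ⟨0, ?_⟩
    rintro C ⟨x, hx0, -, rfl⟩
    exact Finset.sum_nonneg fun i _ => mul_nonneg (hx0 i) (hnn i _ (hx0 i))
  have hlb : ∀ M, ∀ C ∈ S M, (0:ℝ) ≤ C := by
    rintro M C ⟨x, hx0, -, rfl⟩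
    exact Finset.sum_nonneg fun i _ => mul_nonneg (hx0 i) (hnn i _ (hx0 i))
  have hne : ∀ M : ℝ, 0 ≤ M → (S M).Nonempty := fun M hM => ⟨_, hmem M hM⟩
  have hopt_nonneg : ∀ M : ℝ, 0 ≤ M → 0 ≤ OptCost n c M := by
    intro M hM
    rw [hOpt]
    exact le_csInf (hne M hM) (hlb M)
  have hci₀ : Tendsto (c i₀) atTop (nhds B) := by
    have h := hL i₀
    rw [hi₀] at h
    exact EReal.tendsto_coe.mp h
  -- upper bound eventually
  have h_up : ∀ᶠ M in atTop, OptCost n c M / M ≤ c i₀ M := by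
    filter_upwards [eventually_ge_atTop (1:ℝ)] with M hM
    have hM0 : (0:ℝ) < M := lt_of_lt_of_le one_pos hM
    have h1 : OptCost n c M ≤ M * c i₀ M := by
      rw [hOpt]; exact csInf_le (hbdd M) (hmem M hM0.le)
    rw [div_le_iff₀ hM0]
    linarith [h1]
  refine tendsto_order.2 ⟨?_, ?_⟩
  · -- ∀ a < B, eventually a < OptCost/M
    intro a ha
    rcases lt_or_ge a 0 with ha0 | ha0
    · filter_upwards [eventually_ge_atTop (1:ℝ)] with M hM
      have hM0 : (0:ℝ) < M := lt_of_lt_of_le one_pos hM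
      exact lt_of_lt_of_le ha0 (div_nonneg (hopt_nonneg M hM0.le) hM0.le)
    · set δ : ℝ := (B - a) / 2 with hδ
      have hδpos : 0 < δ := by rw [hδ]; linarith
      have haBδ : a < B - δ := by rw [hδ]; linarith
      have hBδpos : 0 < B - δ := lt_of_le_of_lt ha0 haBδ
      -- thresholds
      have hz : ∀ i, ∃ z : ℝ, ∀ x ≥ z, B - δ < c i x := by
        intro i
        have hlt : ((B - δ : ℝ) : EReal) < L i := by
          refine lt_of_lt_of_le ?_ (hB.2 ⟨i, rfl⟩)
          exact_mod_cast sub_lt_self B hδpos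
        have := (hL i).eventually (eventually_gt_nhds hlt)
        rw [eventually_atTop] at this
        obtain ⟨z, hzz⟩ := this
        exact ⟨z, fun x hx => by exact_mod_cast hzz x hx⟩
      choose z hzspec using hz
      set Z : ℝ := max 0 (Finset.univ.sup' Finset.univ_nonempty z) with hZ
      have hZ0 : 0 ≤ Z := le_max_left _ _
      have hZi : ∀ i, z i ≤ Z :=
        fun i => le_trans (Finset.le_sup' z (Finset.mem_univ i)) (le_max_right _ _)
      have key : ∀ M : ℝ, 0 ≤ M → (M - n * Z) * (B - δ) ≤ OptCost n c M := by
        intro M hM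
        rw [hOpt]
        refine le_csInf (hne M hM) ?_
        rintro C ⟨x, hx0, hxsum, rfl⟩
        have per : ∀ i, (x i - Z) * (B - δ) ≤ x i * c i (x i) := by
          intro i
          rcases le_or_gt Z (x i) with h | h
          · have hc : B - δ ≤ c i (x i) := (hzspec i (x i) (le_trans (hZi i) h)).le
            nlinarith [hx0 i, hZ0]
          · have h1 : (x i - Z) * (B - δ) ≤ 0 :=
              mul_nonpos_of_nonpos_of_nonneg (by linarith) hBδpos.le
            exact h1.trans (mul_nonneg (hx0 i) (hnn i _ (hx0 i)))
        calc (M - n * Z) * (B - δ) = ∑ i, (x i - Z) * (B - δ) := by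
              rw [← Finset.sum_mul, Finset.sum_sub_distrib, hxsum, Finset.sum_const,
                Finset.card_univ, Fintype.card_fin, nsmul_eq_mul]
          _ ≤ ∑ i, x i * c i (x i) := Finset.sum_le_sum fun i _ => per i
      -- the lower bound function tends to B - δ
      have t0 : Tendsto (fun M : ℝ => (n * Z) * (B - δ) / M) atTop (nhds 0) := by
        simpa [div_eq_mul_inv] using tendsto_inv_atTop_zero.const_mul ((n * Z) * (B - δ))
      have t1 : Tendsto (fun M : ℝ => (M - n * Z) * (B - δ) / M) atTop (nhds (B - δ)) := by
        have := (tendsto_const_nhds (x := B - δ) (f := atTop (α := ℝ))).sub t0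
        rw [sub_zero] at this
        refine this.congr' ?_
        filter_upwards [eventually_ge_atTop (1:ℝ)] with M hM
        have hM0 : M ≠ 0 := by positivity
        field_simp
      have hev : ∀ᶠ M in atTop, a < (M - n * Z) * (B - δ) / M :=
        t1.eventually (eventually_gt_nhds haBδ)
      filter_upwards [hev, eventually_ge_atTop (1:ℝ)] with M hM1 hM
      have hM0 : (0:ℝ) < M := lt_of_lt_of_le one_pos hM
      exact lt_of_lt_of_le hM1 ((div_le_div_iff_of_pos_right hM0).mpr (key M hM0.le))
  · -- ∀ b > B, eventually OptCost/M < b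
    intro b hb
    filter_upwards [h_up, hci₀.eventually (eventually_lt_nhds hb)] with M h1 h2
    exact lt_of_le_of_lt h1 h2
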